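/- Let d ≥ 2, a, b ∈ ℤ_p. Then the ℤ_p-Lie lattices L^d(a) and L^e(b) are isomorphic if and only if d = e and v_p(a) = v_p(b). -/

import Mathlib

section Aux

attribute [local instance] LieRing.ofAssociativeRing

lemma braFormula {R : Type*} [CommRing R] {L : Type*} [LieRing L] [LieAlgebra R L]
    {d : ℕ} (z : Fin d) (b : Module.Basis (Fin d) R L) (a : R)
    (hab : ∀ i j, i ≠ z → j ≠ z → ⁅b i, b j⁆ = 0)
    (h0 : ∀ i, i ≠ z → ⁅b z, b i⁆ = a • b i)
    (x y : L) : ⁅x, y⁆ = a • ((b.coord z x) • y - (b.coord z y) • x) := by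
  set T : L →ₗ[R] L →ₗ[R] L := (b.coord z).smulRight (LinearMap.id) with hT
  have key : (LieAlgebra.ad R L).toLinearMap = a • (T - T.flip) := by
    apply b.ext; intro i; apply b.ext; intro j
    simp only [LinearMap.smul_apply, LinearMap.sub_apply, LinearMap.flip_apply,
      LinearMap.smulRight_apply, LinearMap.id_apply, LieHom.coe_toLinearMap,
      LieAlgebra.ad_apply, Module.Basis.coord_apply, Module.Basis.repr_self, hT]
    by_cases hi : i = z <;> by_cases hj : j = z
    · subst hi; subst hj; simp
    · subst hi; rw [h0 j hj]; simp [Finsupp.single_apply, hj]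
    · subst hj; rw [← lie_skew, h0 i hi]; simp [Finsupp.single_apply, hi]
    · rw [hab i j hi hj]; simp [Finsupp.single_apply, hi, hj]
  have h2 := LinearMap.congr_fun (LinearMap.congr_fun key x) y
  simpa [smul_sub, hT] using h2

variable {p : ℕ} [hp : Fact p.Prime]

lemma valEq {a c : ℤ_[p]} (ha : a ≠ 0) (u : ℤ_[p]ˣ) (h : a = ↑u * c) :
    a.valuation = c.valuation := by
  have hc : c ≠ 0 := by rintro rfl; simp at h; exact ha h
  have hn : ‖a‖ = ‖c‖ := by rw [h, norm_mul, PadicInt.norm_units, one_mul]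
  rw [PadicInt.norm_eq_zpow_neg_valuation ha, PadicInt.norm_eq_zpow_neg_valuation hc] at hn
  have := zpow_right_injective₀ (by exact_mod_cast hp.1.pos : (0:ℝ) < p)
    (by exact_mod_cast hp.1.ne_one : (p:ℝ) ≠ 1) hn
  omega

lemma unitOfValEq {a c : ℤ_[p]} (ha : a ≠ 0) (hc : c ≠ 0) (h : a.valuation = c.valuation) :
    ∃ u : ℤ_[p]ˣ, a = ↑u * c := by
  refine ⟨PadicInt.unitCoeff ha * (PadicInt.unitCoeff hc)⁻¹, ?_⟩
  have hn : a.valuation = c.valuation := by rw [h]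
  have spec := PadicInt.unitCoeff_spec hc (p := p)
  calc a = ↑(PadicInt.unitCoeff ha) * (p : ℤ_[p]) ^ a.valuation :=
        PadicInt.unitCoeff_spec ha
    _ = ↑(PadicInt.unitCoeff ha) *
        (↑(PadicInt.unitCoeff hc)⁻¹ * (↑(PadicInt.unitCoeff hc) * (p : ℤ_[p]) ^ c.valuation)) := by
        rw [hn, show (↑(PadicInt.unitCoeff hc)⁻¹ * (↑(PadicInt.unitCoeff hc) * (p : ℤ_[p]) ^ c.valuation)) = (p : ℤ_[p]) ^ c.valuation from by rw [← mul_assoc, Units.inv_mul, one_mul]]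
    _ = ↑(PadicInt.unitCoeff ha) * (↑(PadicInt.unitCoeff hc)⁻¹ * c) := by rw [← spec]
    _ = ↑(PadicInt.unitCoeff ha * (PadicInt.unitCoeff hc)⁻¹) * c := by
        rw [Units.val_mul, mul_assoc]

variable {L L' : Type*} [LieRing L] [LieAlgebra ℤ_[p] L] [LieRing L'] [LieAlgebra ℤ_[p] L']

lemma cdvda {d e : ℕ} (z o : Fin d) (z' : Fin e) {a c : ℤ_[p]}
    (b : Module.Basis (Fin d) ℤ_[p] L) (b' : Module.Basis (Fin e) ℤ_[p] L')
    (f : L ≃ₗ⁅ℤ_[p]⁆ L') (hbr : ⁅b z, b o⁆ = a • b o)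
    (hL' : ∀ x y : L', ⁅x, y⁆ = c • ((b'.coord z' x) • y - (b'.coord z' y) • x)) :
    c ∣ a := by
  set W : L' := (b'.coord z' (f (b z))) • f (b o) - (b'.coord z' (f (b o))) • f (b z) with hW
  have hsm : ∀ (t : ℤ_[p]) (x : L), f (t • x) = t • f x := fun t x =>
    LinearEquiv.map_smul f.toLinearEquiv t x
  have hsm' : ∀ (t : ℤ_[p]) (x : L'), f.symm (t • x) = t • f.symm x := fun t x =>
    LinearEquiv.map_smul f.symm.toLinearEquiv t x
  have h2 : a • f (b o) = c • W := by
    rw [← hsm, ← hbr, LieEquiv.map_lie, hL' (f (b z)) (f (b o))]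
  have h3 : a • b o = c • f.symm W := by
    have h := congrArg f.symm h2
    rwa [hsm', hsm', LieEquiv.symm_apply_apply] at h
  have h4 := congrArg (b.coord o) h3
  simp only [map_smul, Module.Basis.coord_apply, Module.Basis.repr_self, Finsupp.single_eq_same,
    smul_eq_mul, mul_one] at h4
  exact ⟨_, h4⟩

lemma mkIso {d : ℕ} (z : Fin d) {a c : ℤ_[p]} (u : ℤ_[p]ˣ) (hu : a = ↑u * c)
    (b : Module.Basis (Fin d) ℤ_[p] L) (b' : Module.Basis (Fin d) ℤ_[p] L')
    (hL : ∀ x y : L, ⁅x, y⁆ = a • ((b.coord z x) • y - (b.coord z y) • x))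
    (hL' : ∀ x y : L', ⁅x, y⁆ = c • ((b'.coord z x) • y - (b'.coord z y) • x)) :
    Nonempty (L ≃ₗ⁅ℤ_[p]⁆ L') := by
  set w : Fin d → ℤ_[p]ˣ := fun i => if i = z then u else 1 with hw
  set b'' : Module.Basis (Fin d) ℤ_[p] L' := b'.unitsSMul w with hb''
  set g : L ≃ₗ[ℤ_[p]] L' := b.equiv b'' (Equiv.refl _) with hgdef
  have hg : ∀ i, g (b i) = (w i : ℤ_[p]) • b' i := fun i => by
    rw [hgdef, Module.Basis.equiv_apply, hb'', Module.Basis.unitsSMul_apply, Equiv.refl_apply,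
      Units.smul_def]
  have hcoord : ∀ x : L, c * (b'.coord z (g x)) = a * (b.coord z x) := by
    have key : (c • ((b'.coord z).comp (g : L →ₗ[ℤ_[p]] L'))) = a • b.coord z := by
      apply b.ext; intro i
      simp only [LinearMap.smul_apply, LinearMap.comp_apply, LinearEquiv.coe_coe,
        Module.Basis.coord_apply, Module.Basis.repr_self, smul_eq_mul]
      rw [hg i, map_smul]
      by_cases hi : i = z
      · subst hi
        simp [hw, Finsupp.single_eq_same, hu]
        ring
      · simp [hw, hi, Finsupp.single_apply]
    intro x
    have := LinearMap.congr_fun key x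
    simpa using this
  have map_lie : ∀ x y : L, g ⁅x, y⁆ = ⁅g x, g y⁆ := by
    intro x y
    rw [hL x y, hL' (g x) (g y), map_smul, map_sub, map_smul, map_smul,
      smul_sub, smul_sub, smul_smul, smul_smul, smul_smul, smul_smul,
      hcoord x, hcoord y]
  exact ⟨{ toLinearMap := (g : L →ₗ[ℤ_[p]] L'),
           map_lie' := fun {x y} => map_lie x y,
           invFun := g.symm, left_inv := g.left_inv, right_inv := g.right_inv }⟩

end Aux

/-- For `d, e ≥ 2`, the `ℤ_p`-Lie lattices `L^d(a)` and `L^e(c)`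
are isomorphic if and only if `d = e` and `v_p(a) = v_p(c)` (with `v_p(0) = ∞`). -/
theorem stmt_10 (p : ℕ) [Fact p.Prime] (d e : ℕ) (hd : 2 ≤ d) (he : 2 ≤ e)
    (a c : ℤ_[p])
    (L L' : Type*) [LieRing L] [LieAlgebra ℤ_[p] L] [LieRing L'] [LieAlgebra ℤ_[p] L']
    (b : Module.Basis (Fin d) ℤ_[p] L)
    (hab : ∀ i j : Fin d, i ≠ ⟨0, by omega⟩ → j ≠ ⟨0, by omega⟩ → ⁅b i, b j⁆ = 0)
    (h0 : ∀ i : Fin d, i ≠ ⟨0, by omega⟩ → ⁅b ⟨0, by omega⟩, b i⁆ = a • b i)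
    (b' : Module.Basis (Fin e) ℤ_[p] L')
    (hab' : ∀ i j : Fin e, i ≠ ⟨0, by omega⟩ → j ≠ ⟨0, by omega⟩ → ⁅b' i, b' j⁆ = 0)
    (h0' : ∀ i : Fin e, i ≠ ⟨0, by omega⟩ → ⁅b' ⟨0, by omega⟩, b' i⁆ = c • b' i) :
    Nonempty (L ≃ₗ⁅ℤ_[p]⁆ L') ↔
      d = e ∧ ((a = 0 ∧ c = 0) ∨ (a ≠ 0 ∧ c ≠ 0 ∧ a.valuation = c.valuation)) := by
  have hz : (0 : ℕ) < d := by omega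
  have hz' : (0 : ℕ) < e := by omega
  set z : Fin d := ⟨0, hz⟩ with hzdef
  set z' : Fin e := ⟨0, hz'⟩ with hz'def
  have hL : ∀ x y : L, ⁅x, y⁆ = a • ((b.coord z x) • y - (b.coord z y) • x) :=
    braFormula z b a hab h0
  have hL' : ∀ x y : L', ⁅x, y⁆ = c • ((b'.coord z' x) • y - (b'.coord z' y) • x) :=
    braFormula z' b' c hab' h0'
  constructor
  · rintro ⟨f⟩
    have hde : d = e := by
      have eqv : Fin d ≃ Fin e := b.indexEquiv (b'.map f.symm.toLinearEquiv)
      simpa using Fintype.card_congr eqv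
    refine ⟨hde, ?_⟩
    set o : Fin d := ⟨1, by omega⟩ with hodef
    set o' : Fin e := ⟨1, by omega⟩ with ho'def
    have hoz : o ≠ z := by simp [hodef, hzdef, Fin.ext_iff]
    have hoz' : o' ≠ z' := by simp [ho'def, hz'def, Fin.ext_iff]
    have hca : c ∣ a := cdvda z o z' b b' f (h0 o hoz) hL'
    have hac : a ∣ c := cdvda z' o' z b' b f.symm (h0' o' hoz') hL
    by_cases ha : a = 0
    · left
      exact ⟨ha, by simpa [ha] using hac⟩
    · right
      have hc : c ≠ 0 := fun h => ha (by simpa [h] using hca)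
      obtain ⟨u, hu⟩ := associated_of_dvd_dvd hca hac
      exact ⟨ha, hc, valEq ha u (by rw [← hu]; ring)⟩
  · rintro ⟨rfl, h⟩
    obtain ⟨u, hu⟩ : ∃ u : ℤ_[p]ˣ, a = ↑u * c := by
      rcases h with ⟨rfl, rfl⟩ | ⟨ha, hc, hval⟩
      · exact ⟨1, by simp⟩
      · exact unitOfValEq ha hc hval
    exact mkIso z u hu b b' hL hL'
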